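/- Let G be a finite connected non-complete simple graph with clique number ω(G) ≥ 3 and diameter D = diam(G), and write ω(G) = qD + s with 0 ≤ s ≤ D − 1. Then mob(G) ≥ mob*(G) ≥ 1 + ⌈ω(G)/D⌉ − θ(s), where θ(s) = 1 if s = 1 and θ(s) = 0 otherwise. -/

import Mathlib

open SimpleGraph

variable {V : Type*} {W : Type*}

/-- `S` is a general position set of `G`: no shortest path of `G` contains more than two
vertices of `S`. -/
def IsGenPosSet (G : SimpleGraph V) (S : Set V) : Prop :=
  ∀ ⦃u v : V⦄ (p : G.Walk u v), p.IsPath → p.length = G.dist u v →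
    (S ∩ {x | x ∈ p.support}).ncard ≤ 2

/-- `S` is a mutual visibility set of `G`: any two vertices of `S` are joined by a shortest
path containing no further vertex of `S`. -/
def IsMutVisSet (G : SimpleGraph V) (S : Set V) : Prop :=
  ∀ ⦃u⦄, u ∈ S → ∀ ⦃v⦄, v ∈ S → ∃ p : G.Walk u v,
    p.IsPath ∧ p.length = G.dist u v ∧ ∀ x ∈ p.support, x ∈ S → x = u ∨ x = v

/-- A legal move (with respect to the position property `P`) of a configuration of `t` robots
on distinct vertices: one robot moves to an adjacent unoccupied vertex, and the resulting set
of occupied vertices again satisfies `P`. -/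
def LegalMove (G : SimpleGraph V) (P : Set V → Prop) {t : ℕ} (f g : Fin t ↪ V) : Prop :=
  ∃ i : Fin t, G.Adj (f i) (g i) ∧ g i ∉ Set.range ⇑f ∧ (∀ j, j ≠ i → g j = f j) ∧
    P (Set.range ⇑g)

/-- A configuration is a mobile `P`-configuration if it satisfies `P` and there is a sequence
of legal moves starting from it such that every vertex is visited by some robot. -/
def IsMobileConfig (G : SimpleGraph V) (P : Set V → Prop) {t : ℕ} (f : Fin t ↪ V) : Prop :=
  P (Set.range ⇑f) ∧ ∃ (N : ℕ) (c : ℕ → (Fin t ↪ V)), c 0 = f ∧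
    (∀ k < N, LegalMove G P (c k) (c (k + 1))) ∧ ∀ v : V, ∃ k ≤ N, ∃ i, c k i = v

/-- A configuration is completely mobile if it is mobile and moreover every robot can visit
every vertex via a sequence of legal moves. -/
def IsCompletelyMobileConfig (G : SimpleGraph V) (P : Set V → Prop) {t : ℕ}
    (f : Fin t ↪ V) : Prop :=
  IsMobileConfig G P f ∧ ∀ (v : V) (i : Fin t), ∃ (N : ℕ) (c : ℕ → (Fin t ↪ V)), c 0 = f ∧
    (∀ k < N, LegalMove G P (c k) (c (k + 1))) ∧ ∃ k ≤ N, c k i = v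

/-- The mobile general position number `mob(G)`. -/
noncomputable def mobGP (G : SimpleGraph V) : ℕ :=
  sSup {t : ℕ | ∃ f : Fin t ↪ V, IsMobileConfig G (IsGenPosSet G) f}

/-- The completely mobile general position number `mob*(G)`. -/
noncomputable def cmobGP (G : SimpleGraph V) : ℕ :=
  sSup {t : ℕ | ∃ f : Fin t ↪ V, IsCompletelyMobileConfig G (IsGenPosSet G) f}

/-- The mobile mutual visibility number `mobmv(G)`. -/
noncomputable def mobMV (G : SimpleGraph V) : ℕ :=
  sSup {t : ℕ | ∃ f : Fin t ↪ V, IsMobileConfig G (IsMutVisSet G) f}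

/-- The completely mobile mutual visibility number `mobmv*(G)`. -/
noncomputable def cmobMV (G : SimpleGraph V) : ℕ :=
  sSup {t : ℕ | ∃ f : Fin t ↪ V, IsCompletelyMobileConfig G (IsMutVisSet G) f}

/-- The mutual visibility number `μ(G)`. -/
noncomputable def muMV (G : SimpleGraph V) : ℕ :=
  sSup {n : ℕ | ∃ S : Set V, IsMutVisSet G S ∧ S.ncard = n}

/-- `μ₂(G)`: the largest cardinality of a mutual visibility set whose vertices are pairwise at
distance at most `2`. -/
noncomputable def muMV2 (G : SimpleGraph V) : ℕ :=
  sSup {n : ℕ | ∃ S : Set V, IsMutVisSet G S ∧ (∀ u ∈ S, ∀ v ∈ S, G.dist u v ≤ 2) ∧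
    S.ncard = n}

/-- The join `G ∨ H` of two graphs: the disjoint union together with all edges between the
two vertex sets. -/
def graphJoin (G : SimpleGraph V) (H : SimpleGraph W) : SimpleGraph (V ⊕ W) where
  Adj x y := match x, y with
    | Sum.inl a, Sum.inl b => G.Adj a b
    | Sum.inr a, Sum.inr b => H.Adj a b
    | Sum.inl _, Sum.inr _ => True
    | Sum.inr _, Sum.inl _ => True
  symm := ⟨by rintro (a | a) (b | b) h <;> simp_all <;> exact h.symm⟩
  loopless := ⟨by rintro (a | a) h <;> simp_all⟩

/-- The strong product `G ⊠ H` of two graphs. -/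
def strongProd (G : SimpleGraph V) (H : SimpleGraph W) : SimpleGraph (V × W) where
  Adj x y := (x.1 = y.1 ∧ H.Adj x.2 y.2) ∨ (x.2 = y.2 ∧ G.Adj x.1 y.1) ∨
    (G.Adj x.1 y.1 ∧ H.Adj x.2 y.2)
  symm := by
    constructor
    rintro ⟨a, b⟩ ⟨c, d⟩ (⟨h1, h2⟩ | ⟨h1, h2⟩ | ⟨h1, h2⟩)
    · exact Or.inl ⟨h1.symm, h2.symm⟩
    · exact Or.inr (Or.inl ⟨h1.symm, h2.symm⟩)
    · exact Or.inr (Or.inr ⟨h1.symm, h2.symm⟩)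
  loopless := ⟨by rintro ⟨a, b⟩ (⟨_, h⟩ | ⟨_, h⟩ | ⟨h, _⟩) <;> simp_all⟩

/-- A vertex `u` is a hub if any two distinct non-adjacent vertices different from `u` are
both adjacent to `u`. -/
def IsHub (G : SimpleGraph V) (u : V) : Prop :=
  ∀ ⦃w₁ w₂ : V⦄, w₁ ≠ u → w₂ ≠ u → w₁ ≠ w₂ → ¬G.Adj w₁ w₂ → G.Adj w₁ u ∧ G.Adj w₂ u

/-- A block graph: every block is complete; equivalently, the vertices of any cycle form a
clique. -/
def IsBlockGraph (G : SimpleGraph V) : Prop :=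
  ∀ (v : V) (c : G.Walk v v), c.IsCycle → G.IsClique {x | x ∈ c.support}

/-- The graph obtained from the complete graph `K n` (on vertices `1, ..., n`) by attaching
one pendant vertex `0`, adjacent only to vertex `1`. -/
def cliqueWithLeaf (n : ℕ) : SimpleGraph (Fin (n + 1)) :=
  SimpleGraph.fromRel (fun i j => (i ≠ 0 ∧ j ≠ 0) ∨ (i = 0 ∧ j = 1))

/-- `G` is (isomorphic to) a path graph. -/
def IsPathGraph (G : SimpleGraph V) : Prop :=
  ∃ n : ℕ, Nonempty (G ≃g pathGraph n)


section Helpers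
set_option linter.unusedSectionVars false
set_option maxHeartbeats 1000000
variable [DecidableEq V]


lemma geo_split {G : SimpleGraph V} (hconn : G.Connected) {u v : V} (p : G.Walk u v)
    (hlen : p.length = G.dist u v) {a : V} (ha : a ∈ p.support) :
    G.dist u a = (p.takeUntil a ha).length ∧ G.dist a v = (p.dropUntil a ha).length ∧
      G.dist u a + G.dist a v = G.dist u v := by
  have h1 : G.dist u a ≤ (p.takeUntil a ha).length := dist_le _
  have h2 : G.dist a v ≤ (p.dropUntil a ha).length := dist_le _
  have h3 : (p.takeUntil a ha).length + (p.dropUntil a ha).length = p.length := by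
    rw [← Walk.length_append, p.take_spec ha]
  have h4 := hconn.dist_triangle (u := u) (v := a) (w := v)
  omega

lemma geo_between {G : SimpleGraph V} (hconn : G.Connected) {u v : V} (p : G.Walk u v)
    (hlen : p.length = G.dist u v) {a b : V} (ha : a ∈ p.support) (hb : b ∈ p.support) :
    G.dist u a + G.dist a b = G.dist u b ∨ G.dist u b + G.dist a b = G.dist u a := by
  obtain ⟨e1, e2, e3⟩ := geo_split hconn p hlen ha
  have hb' : b ∈ (p.takeUntil a ha).support ∨ b ∈ (p.dropUntil a ha).support := by
    rw [← Walk.mem_support_append_iff, p.take_spec ha]; exact hb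
  rcases hb' with hb1 | hb2
  · obtain ⟨f1, f2, f3⟩ := geo_split hconn (p.takeUntil a ha) e1.symm hb1
    right
    rw [dist_comm (G := G) (u := b) (v := a)] at f3
    omega
  · obtain ⟨f1, f2, f3⟩ := geo_split hconn (p.dropUntil a ha) e2.symm hb2
    obtain ⟨g1, g2, g3⟩ := geo_split hconn p hlen hb
    left
    omega


lemma isGenPosSet_of_noCollinear {G : SimpleGraph V} (hconn : G.Connected) (S : Set V)
    (h : ∀ a ∈ S, ∀ b ∈ S, ∀ c ∈ S, a ≠ b → a ≠ c → b ≠ c →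
      G.dist a b + G.dist b c ≠ G.dist a c) :
    IsGenPosSet G S := by
  intro u v p _ hlen
  by_contra hcon
  push_neg at hcon
  obtain ⟨t, hts, ht3⟩ := Set.exists_subset_card_eq (n := 3) (s := S ∩ {x | x ∈ p.support}) (by omega)
  obtain ⟨a, b, c, hab, hac, hbc, rfl⟩ := Set.ncard_eq_three.mp ht3
  have haS : a ∈ S ∧ a ∈ p.support := by
    have := hts (Set.mem_insert _ _); exact ⟨this.1, this.2⟩
  have hbS : b ∈ S ∧ b ∈ p.support := by
    have := hts (by right; left; rfl : b ∈ ({a, b, c} : Set V)); exact ⟨this.1, this.2⟩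
  have hcS : c ∈ S ∧ c ∈ p.support := by
    have := hts (by right; right; rfl : c ∈ ({a, b, c} : Set V)); exact ⟨this.1, this.2⟩
  have B1 := geo_between hconn p hlen haS.2 hbS.2
  have B2 := geo_between hconn p hlen haS.2 hcS.2
  have B3 := geo_between hconn p hlen hbS.2 hcS.2
  have n1 := h a haS.1 b hbS.1 c hcS.1 hab hac hbc
  have n2 := h b hbS.1 a haS.1 c hcS.1 (Ne.symm hab) hbc hac
  have n3 := h a haS.1 c hcS.1 b hbS.1 hac hab (Ne.symm hbc)
  rw [dist_comm (G := G) (u := b) (v := a)] at n2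
  rw [dist_comm (G := G) (u := c) (v := b)] at n3
  omega


def Reach (G : SimpleGraph V) (P : Set V → Prop) {t : ℕ} (f g : Fin t ↪ V) : Prop :=
  ∃ (N : ℕ) (c : ℕ → (Fin t ↪ V)), c 0 = f ∧ (∀ k < N, LegalMove G P (c k) (c (k + 1))) ∧
    c N = g

lemma reach_refl {G : SimpleGraph V} {P : Set V → Prop} {t : ℕ} (f : Fin t ↪ V) :
    Reach G P f f :=
  ⟨0, fun _ => f, rfl, fun k hk => absurd hk (by omega), rfl⟩

lemma splice {G : SimpleGraph V} {P : Set V → Prop} {t : ℕ} {N1 N2 : ℕ}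
    {c1 c2 : ℕ → (Fin t ↪ V)}
    (h1 : ∀ k < N1, LegalMove G P (c1 k) (c1 (k + 1)))
    (h2 : ∀ k < N2, LegalMove G P (c2 k) (c2 (k + 1)))
    (hmid : c1 N1 = c2 0) :
    ∃ c : ℕ → (Fin t ↪ V), (∀ k ≤ N1, c k = c1 k) ∧ (∀ k ≤ N2, c (N1 + k) = c2 k) ∧
      ∀ k < N1 + N2, LegalMove G P (c k) (c (k + 1)) := by
  refine ⟨fun k => if k ≤ N1 then c1 k else c2 (k - N1), fun k hk => by simp [hk], ?_, ?_⟩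
  · intro k hk
    by_cases h : N1 + k ≤ N1
    · have : k = 0 := by omega
      subst this
      simp only [if_pos h]
      have : N1 + 0 = N1 := by omega
      rw [this, hmid]
    · simp only [if_neg h]
      congr 1
      omega
  · intro k hk
    by_cases hk1 : k + 1 ≤ N1
    · simp only [if_pos (by omega : k ≤ N1), if_pos hk1]
      exact h1 k (by omega)
    · by_cases hk0 : k ≤ N1
      · have hkN : k = N1 := by omega
        subst hkN
        simp only [if_pos le_rfl, if_neg hk1, hmid]
        have h01 : k + 1 - k = 1 := by omega
        rw [h01]
        exact h2 0 (by omega)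
      · simp only [if_neg hk0, if_neg hk1]
        have : k + 1 - N1 = (k - N1) + 1 := by omega
        rw [this]
        exact h2 (k - N1) (by omega)

lemma Reach.trans {G : SimpleGraph V} {P : Set V → Prop} {t : ℕ} {f g h : Fin t ↪ V}
    (hfg : Reach G P f g) (hgh : Reach G P g h) : Reach G P f h := by
  obtain ⟨N1, c1, h10, h1l, h1N⟩ := hfg
  obtain ⟨N2, c2, h20, h2l, h2N⟩ := hgh
  obtain ⟨c, hca, hcb, hcl⟩ := splice h1l h2l (by rw [h1N, h20])
  exact ⟨N1 + N2, c, by rw [hca 0 (by omega), h10], hcl, by rw [hcb N2 le_rfl, h2N]⟩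

lemma legal_P {G : SimpleGraph V} {P : Set V → Prop} {t : ℕ} {f g : Fin t ↪ V}
    (h : LegalMove G P f g) : P (Set.range ⇑g) := h.choose_spec.2.2.2

lemma LegalMove.symm {G : SimpleGraph V} {P : Set V → Prop} {t : ℕ} {f g : Fin t ↪ V}
    (h : LegalMove G P f g) (hP : P (Set.range ⇑f)) : LegalMove G P g f := by
  obtain ⟨i, hadj, hni, hoth, hPg⟩ := h
  refine ⟨i, hadj.symm, ?_, fun j hj => (hoth j hj).symm, hP⟩
  rintro ⟨j, hj⟩
  by_cases hji : j = i
  · subst hji; exact hadj.ne hj.symm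
  · rw [hoth j hji] at hj; exact hji (f.injective hj)

lemma reach_P_all {G : SimpleGraph V} {P : Set V → Prop} {t : ℕ} {N : ℕ}
    {c : ℕ → (Fin t ↪ V)} (hl : ∀ k < N, LegalMove G P (c k) (c (k + 1)))
    (hP : P (Set.range ⇑(c 0))) : ∀ k ≤ N, P (Set.range ⇑(c k)) := by
  intro k hk
  induction k with
  | zero => exact hP
  | succ n ih => exact legal_P (hl n (by omega))

lemma Reach.symm {G : SimpleGraph V} {P : Set V → Prop} {t : ℕ} {f g : Fin t ↪ V}
    (h : Reach G P f g) (hP : P (Set.range ⇑f)) : Reach G P g f := by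
  obtain ⟨N, c, h0, hl, hN⟩ := h
  refine ⟨N, fun k => c (N - k), by simp only [Nat.sub_zero, hN], ?_, by simp only [Nat.sub_self, h0]⟩
  intro k hk
  have h1 : N - k = (N - (k + 1)) + 1 := by omega
  have h2 := hl (N - (k + 1)) (by omega)
  have h3 := reach_P_all hl (by rw [h0]; exact hP) (N - (k + 1)) (by omega)
  simp only []
  rw [h1]
  exact h2.symm h3


def updE {t : ℕ} (f : Fin t ↪ V) (i : Fin t) (w : V) (hw : w ∉ Set.range ⇑f) : Fin t ↪ V :=
  ⟨Function.update ⇑f i w, by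
    intro a b hab
    by_cases ha : a = i <;> by_cases hb : b = i
    · rw [ha, hb]
    · rw [ha] at hab ⊢
      rw [Function.update_self, Function.update_of_ne hb] at hab
      exact absurd ⟨b, hab.symm⟩ hw
    · rw [hb] at hab ⊢
      rw [Function.update_self, Function.update_of_ne ha] at hab
      exact absurd ⟨a, hab⟩ hw
    · rw [Function.update_of_ne ha, Function.update_of_ne hb] at hab
      exact f.injective hab⟩

lemma updE_same {t : ℕ} (f : Fin t ↪ V) (i : Fin t) (w : V) (hw : w ∉ Set.range ⇑f) :
    updE f i w hw i = w := by
  show Function.update (⇑f) i w i = w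
  exact Function.update_self i w ⇑f

lemma updE_noteq {t : ℕ} (f : Fin t ↪ V) (i : Fin t) (w : V) (hw : w ∉ Set.range ⇑f)
    {j : Fin t} (hj : j ≠ i) : updE f i w hw j = f j := by
  show Function.update (⇑f) i w j = f j
  exact Function.update_of_ne hj w ⇑f

lemma range_updE {t : ℕ} (f : Fin t ↪ V) (i : Fin t) (w : V) (hw : w ∉ Set.range ⇑f) :
    Set.range ⇑(updE f i w hw) = insert w (Set.range ⇑f \ {f i}) := by
  ext x
  constructor
  · rintro ⟨j, rfl⟩
    by_cases hj : j = i
    · subst hj; rw [updE_same]; exact Set.mem_insert _ _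
    · rw [updE_noteq f i w hw hj]
      exact Set.mem_insert_of_mem _ ⟨⟨j, rfl⟩, fun h => hj (f.injective h)⟩
  · rintro (rfl | ⟨⟨j, rfl⟩, hne⟩)
    · exact ⟨i, updE_same f i _ hw⟩
    · have hj : j ≠ i := fun h => hne (by rw [h]; exact rfl)
      exact ⟨j, updE_noteq f i w hw hj⟩

lemma reach_single {G : SimpleGraph V} {P : Set V → Prop} {t : ℕ} (f : Fin t ↪ V)
    (i : Fin t) (w : V) (hadj : G.Adj (f i) w) (hw : w ∉ Set.range ⇑f)
    (hP : P (Set.range ⇑(updE f i w hw))) : Reach G P f (updE f i w hw) := by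
  refine ⟨1, fun k => if k = 0 then f else updE f i w hw, if_pos rfl, ?_, if_neg one_ne_zero⟩
  intro k hk
  have hk0 : k = 0 := by omega
  subst hk0
  have e1 : (if (0:ℕ) = 0 then f else updE f i w hw) = f := if_pos rfl
  have e2 : (if (0+1:ℕ) = 0 then f else updE f i w hw) = updE f i w hw := if_neg one_ne_zero
  show LegalMove G P (if (0:ℕ) = 0 then f else updE f i w hw) (if (0+1:ℕ) = 0 then f else updE f i w hw)
  rw [e1, e2]
  exact ⟨i, by rwa [updE_same], by rwa [updE_same], fun j hj => updE_noteq f i w hw hj, hP⟩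


-- clique dist
lemma clique_dist_eq_one {G : SimpleGraph V} {Q : Finset V} (hQ : G.IsClique ↑Q)
    {a b : V} (ha : a ∈ Q) (hb : b ∈ Q) (hab : a ≠ b) : G.dist a b = 1 :=
  dist_eq_one_iff_adj.mpr (hQ ha hb hab)

lemma isGenPosSet_of_subset_clique {G : SimpleGraph V} (hconn : G.Connected)
    {Q : Finset V} (hQ : G.IsClique ↑Q) {S : Set V} (hS : S ⊆ ↑Q) : IsGenPosSet G S := by
  apply isGenPosSet_of_noCollinear hconn
  intro a ha b hb c hc hab hac hbc
  rw [clique_dist_eq_one hQ (hS ha) (hS hb) hab, clique_dist_eq_one hQ (hS hb) (hS hc) hbc,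
    clique_dist_eq_one hQ (hS ha) (hS hc) hac]
  omega

lemma clique_reach {G : SimpleGraph V} (hconn : G.Connected) {Q : Finset V}
    (hQ : G.IsClique ↑Q) {t : ℕ} (hcard : t < Q.card) (f g : Fin t ↪ V)
    (hf : Set.range ⇑f ⊆ ↑Q) (hg : Set.range ⇑g ⊆ ↑Q) :
    Reach G (IsGenPosSet G) f g := by
  -- auxiliary: there's always a spare vertex
  have spare : ∀ h : Fin t ↪ V, Set.range ⇑h ⊆ ↑Q → ∃ z ∈ Q, z ∉ Set.range ⇑h := by
    intro h hh
    have himg : (Finset.univ.image ⇑h).card = t := by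
      rw [Finset.card_image_of_injective _ h.injective, Finset.card_univ, Fintype.card_fin]
    have hnsub : ¬ (Q ⊆ Finset.univ.image ⇑h) := by
      intro hsub
      have := Finset.card_le_card hsub
      omega
    obtain ⟨z, hzQ, hz⟩ := Finset.not_subset.mp hnsub
    refine ⟨z, hzQ, fun ⟨j, hj⟩ => hz ?_⟩
    exact Finset.mem_image.mpr ⟨j, Finset.mem_univ j, hj⟩
  have key : ∀ k : ℕ, k ≤ t → ∃ h : Fin t ↪ V, Reach G (IsGenPosSet G) f h ∧
      Set.range ⇑h ⊆ ↑Q ∧ ∀ i : Fin t, (i : ℕ) < k → h i = g i := by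
    intro k hk
    induction k with
    | zero => exact ⟨f, reach_refl f, hf, fun i hi => absurd hi (by omega)⟩
    | succ n ih =>
      obtain ⟨h, hreach, hhQ, hagree⟩ := ih (by omega)
      have hnt : n < t := by omega
      set im : Fin t := ⟨n, hnt⟩ with him
      have hv : (im : ℕ) = n := rfl
      by_cases heq : h im = g im
      · refine ⟨h, hreach, hhQ, fun i hi => ?_⟩
        by_cases hin : (i : ℕ) < n
        · exact hagree i hin
        · have : i = im := by apply Fin.ext; omega
          rw [this, heq]
      · -- first, if g im is occupied, move that robot to a spare vertex
        have step : ∃ h2 : Fin t ↪ V, Reach G (IsGenPosSet G) f h2 ∧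
            Set.range ⇑h2 ⊆ ↑Q ∧ (∀ i : Fin t, (i : ℕ) < n → h2 i = g i) ∧
            h2 im = h im ∧ g im ∉ Set.range ⇑h2 := by
          by_cases hocc : g im ∈ Set.range ⇑h
          · obtain ⟨j, hj⟩ := hocc
            have hjim : j ≠ im := fun he => heq (he ▸ hj)
            obtain ⟨z, hzQ, hz⟩ := spare h hhQ
            have hadj : G.Adj (h j) z := by
              apply hQ (hhQ ⟨j, rfl⟩) hzQ
              intro he
              exact hz ⟨j, he⟩
            have hP : IsGenPosSet G (Set.range ⇑(updE h j z hz)) := by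
              apply isGenPosSet_of_subset_clique hconn hQ
              rw [range_updE]
              intro x hx
              rcases hx with rfl | ⟨hx1, _⟩
              · exact hzQ
              · exact hhQ hx1
            refine ⟨updE h j z hz, hreach.trans (reach_single h j z hadj hz hP), ?_, ?_, ?_, ?_⟩
            · rw [range_updE]
              intro x hx
              rcases hx with rfl | ⟨hx1, _⟩
              · exact hzQ
              · exact hhQ hx1
            · intro i hi
              have hij : i ≠ j := by
                intro he
                rw [← he, hagree i hi] at hj
                have h5 : (i : ℕ) = (im : ℕ) := congrArg Fin.val (g.injective hj)
                omega
              rw [updE_noteq h j z hz hij]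
              exact hagree i hi
            · rw [updE_noteq h j z hz hjim.symm]
            · rw [range_updE]
              rintro (he | ⟨⟨l, hl⟩, hne⟩)
              · exact hz (he ▸ ⟨j, hj⟩)
              · exact hne (by rw [← hj]; exact rfl)
          · exact ⟨h, hreach, hhQ, hagree, rfl, hocc⟩
        obtain ⟨h2, hreach2, hh2Q, hagree2, h2im, hfree⟩ := step
        have hadj2 : G.Adj (h2 im) (g im) := by
          apply hQ (hh2Q ⟨im, rfl⟩) (hg ⟨im, rfl⟩)
          rw [h2im]
          exact heq
        have hP2 : IsGenPosSet G (Set.range ⇑(updE h2 im (g im) hfree)) := by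
          apply isGenPosSet_of_subset_clique hconn hQ
          rw [range_updE]
          intro x hx
          rcases hx with rfl | ⟨hx1, _⟩
          · exact hg ⟨im, rfl⟩
          · exact hh2Q hx1
        refine ⟨updE h2 im (g im) hfree,
          hreach2.trans (reach_single h2 im (g im) hadj2 hfree hP2), ?_, ?_⟩
        · rw [range_updE]
          intro x hx
          rcases hx with rfl | ⟨hx1, _⟩
          · exact hg ⟨im, rfl⟩
          · exact hh2Q hx1
        · intro i hi
          by_cases hin : (i : ℕ) < n
          · have hiim : i ≠ im := by
              intro he
              rw [he] at hin
              omega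
            rw [updE_noteq _ _ _ _ hiim]
            exact hagree2 i hin
          · have : i = im := by apply Fin.ext; omega
            rw [this, updE_same]
  obtain ⟨h, hreach, _, hagree⟩ := key t le_rfl
  have : h = g := by
    apply DFunLike.ext
    intro i
    exact hagree i i.isLt
  rwa [this] at hreach


-- walk distance facts along a geodesic
lemma getVert_dist_facts {G : SimpleGraph V} (hconn : G.Connected) {w y : V}
    (p : G.Walk w y) (hlen : p.length = G.dist w y) :
    ∀ j ≤ p.length, G.dist w (p.getVert j) = j ∧
      G.dist (p.getVert j) y = p.length - j := by
  have aux1 : ∀ j, G.dist w (p.getVert j) ≤ j := by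
    intro j
    induction j with
    | zero => rw [p.getVert_zero]; simp
    | succ n ih =>
      by_cases hn : n < p.length
      · have hadj := p.adj_getVert_succ hn
        have htri := hconn.dist_triangle (u := w) (v := p.getVert n) (w := p.getVert (n+1))
        have := dist_eq_one_iff_adj.mpr hadj
        omega
      · rw [p.getVert_of_length_le (by omega), ← p.getVert_of_length_le (le_refl p.length)]
        have := p.getVert_of_length_le (le_refl p.length)
        calc G.dist w (p.getVert p.length) ≤ p.length := by
              rw [this]; exact dist_le p
          _ ≤ n + 1 := by omega
  have aux2 : ∀ m, ∀ j, j + m = p.length → G.dist (p.getVert j) y ≤ m := by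
    intro m
    induction m with
    | zero =>
      intro j hj
      rw [(by omega : j = p.length), p.getVert_length]
      simp
    | succ n ih =>
      intro j hj
      have hjl : j < p.length := by omega
      have hadj := p.adj_getVert_succ hjl
      have htri := hconn.dist_triangle (u := p.getVert j) (v := p.getVert (j+1)) (w := y)
      have h1 := dist_eq_one_iff_adj.mpr hadj
      have h2 := ih (j+1) (by omega)
      omega
  intro j hj
  have h1 := aux1 j
  have h2 := aux2 (p.length - j) j (by omega)
  have htri := hconn.dist_triangle (u := w) (v := p.getVert j) (w := y)
  omega

-- the dive lemma
lemma dive {G : SimpleGraph V} {t : ℕ} (f : Fin t ↪ V) (i : Fin t) {w y : V}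
    (p : G.Walk w y) (hfi : f i = w)
    (hx : ∀ j, 1 ≤ j → j ≤ p.length → p.getVert j ∉ Set.range ⇑f)
    (hgp : ∀ j ≤ p.length, IsGenPosSet G ((Set.range ⇑f \ {w}) ∪ {p.getVert j})) :
    ∃ g : Fin t ↪ V, Reach G (IsGenPosSet G) f g ∧ g i = y ∧ ∀ l, l ≠ i → g l = f l := by
  have aux : ∀ j ≤ p.length, ∃ g : Fin t ↪ V, Reach G (IsGenPosSet G) f g ∧
      g i = p.getVert j ∧ ∀ l, l ≠ i → g l = f l := by
    intro j hj
    induction j with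
    | zero => exact ⟨f, reach_refl f, by rw [p.getVert_zero, hfi], fun l _ => rfl⟩
    | succ n ih =>
      obtain ⟨g, hreach, hgi, hoth⟩ := ih (by omega)
      have hnl : n < p.length := by omega
      have hadj : G.Adj (g i) (p.getVert (n+1)) := by
        rw [hgi]; exact p.adj_getVert_succ hnl
      have hnotin : p.getVert (n+1) ∉ Set.range ⇑g := by
        rintro ⟨l, hl⟩
        by_cases hli : l = i
        · rw [hli, hgi] at hl
          exact (p.adj_getVert_succ hnl).ne hl
        · rw [hoth l hli] at hl
          exact hx (n+1) (by omega) (by omega) ⟨l, hl⟩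
      have hrange : Set.range ⇑(updE g i (p.getVert (n+1)) hnotin) =
          (Set.range ⇑f \ {w}) ∪ {p.getVert (n+1)} := by
        rw [range_updE]
        ext x
        constructor
        · rintro (rfl | ⟨⟨l, rfl⟩, hne⟩)
          · exact Or.inr rfl
          · have hli : l ≠ i := fun he => hne (by rw [he, hgi]; exact rfl)
            left
            rw [hoth l hli]
            refine ⟨⟨l, rfl⟩, ?_⟩
            rw [← hfi]
            intro hmem
            have h8 : f l = f i := hmem
            exact hli (f.injective h8)
        · rintro (⟨⟨l, rfl⟩, hne⟩ | rfl)
          · have hli : l ≠ i := fun he => hne (by rw [he, hfi]; exact rfl)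
            right
            refine ⟨⟨l, hoth l hli⟩, ?_⟩
            rw [hgi]
            intro hmem
            have h9 : f l = p.getVert n := hmem
            by_cases hn0 : n = 0
            · rw [hn0, p.getVert_zero] at h9
              exact hne (h9 ▸ rfl)
            · exact hx n (by omega) (by omega) ⟨l, h9⟩
          · exact Set.mem_insert _ _
      have hP : IsGenPosSet G (Set.range ⇑(updE g i (p.getVert (n+1)) hnotin)) := by
        rw [hrange]; exact hgp (n+1) (by omega)
      refine ⟨updE g i (p.getVert (n+1)) hnotin,
        hreach.trans (reach_single g i _ hadj hnotin hP), by rw [updE_same], ?_⟩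
      intro l hl
      rw [updE_noteq _ _ _ _ hl]
      exact hoth l hl
  obtain ⟨g, hr, hgi2, hoth2⟩ := aux p.length le_rfl
  exact ⟨g, hr, by rw [hgi2, p.getVert_length], hoth2⟩


lemma completely_mobile_of_reaches {G : SimpleGraph V} [Fintype V] {t : ℕ}
    (f : Fin t ↪ V) (ht : 0 < t) (hP : IsGenPosSet G (Set.range ⇑f))
    (H : ∀ (v : V) (i : Fin t), ∃ g, Reach G (IsGenPosSet G) f g ∧ g i = v) :
    IsCompletelyMobileConfig G (IsGenPosSet G) f := by
  constructor
  · refine ⟨hP, ?_⟩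
    have tour : ∀ L : List V, ∃ (N : ℕ) (c : ℕ → (Fin t ↪ V)), c 0 = f ∧
        (∀ k < N, LegalMove G (IsGenPosSet G) (c k) (c (k + 1))) ∧ c N = f ∧
        ∀ v ∈ L, ∃ k ≤ N, ∃ i, c k i = v := by
      intro L
      induction L with
      | nil =>
        exact ⟨0, fun _ => f, rfl, fun k hk => absurd hk (by omega), rfl, by simp⟩
      | cons v L ih =>
        obtain ⟨N2, c2, h20, h2l, h2N, h2vis⟩ := ih
        obtain ⟨g, hr, hgi⟩ := H v ⟨0, ht⟩
        obtain ⟨Na, ca, ha0, hal, haN⟩ := hr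
        have hrg : Reach G (IsGenPosSet G) f g := ⟨Na, ca, ha0, hal, haN⟩
        obtain ⟨Nb, cb, hb0, hbl, hbN⟩ := hrg.symm hP
        obtain ⟨c', ha', hb', hl'⟩ := splice hal hbl (by rw [haN, hb0])
        have hmid2 : c' (Na + Nb) = c2 0 := by
          rw [hb' Nb le_rfl, hbN, h20]
        obtain ⟨c'', h1'', h2'', hl''⟩ := splice hl' h2l hmid2
        refine ⟨Na + Nb + N2, c'', ?_, hl'', ?_, ?_⟩
        · rw [h1'' 0 (by omega), ha' 0 (by omega), ha0]
        · rw [h2'' N2 le_rfl, h2N]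
        · intro u hu
          rcases List.mem_cons.mp hu with rfl | huL
          · refine ⟨Na, by omega, ⟨0, ht⟩, ?_⟩
            rw [h1'' Na (by omega), ha' Na le_rfl, haN, hgi]
          · obtain ⟨k, hk, i, hki⟩ := h2vis u huL
            refine ⟨Na + Nb + k, by omega, i, ?_⟩
            rw [h2'' k hk, hki]
    obtain ⟨N, c, h0, hl, hN, hvis⟩ := tour (Finset.univ : Finset V).toList
    exact ⟨N, c, h0, hl, fun v => hvis v (Finset.mem_toList.mpr (Finset.mem_univ v))⟩
  · intro v i
    obtain ⟨g, ⟨N, c, h0, hl, hN⟩, hgi⟩ := H v i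
    exact ⟨N, c, h0, hl, N, le_rfl, by rw [hN, hgi]⟩



end Helpers

theorem stmt_1 {V : Type*} [Fintype V] (G : SimpleGraph V) (hconn : G.Connected)
    (hnc : G ≠ ⊤) (hω : 3 ≤ G.cliqueNum) (q s : ℕ)
    (hqs : G.cliqueNum = q * G.diam + s) (hs : s ≤ G.diam - 1) :
    1 + ⌈(G.cliqueNum : ℚ) / (G.diam : ℚ)⌉₊ - (if s = 1 then 1 else 0) ≤ cmobGP G ∧
      cmobGP G ≤ mobGP G := by
  classical
  obtain ⟨Q, hQclique, hQcard⟩ := G.exists_isNClique_cliqueNum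
  set D := G.diam with hDdef
  set ω := G.cliqueNum with hωdef
  have hω3 : 3 ≤ ω := hω
  have hQne : Q.Nonempty := Finset.card_pos.mp (by omega)
  have hVne : Nonempty V := ⟨hQne.choose⟩
  have hpair : ∃ u v : V, u ≠ v ∧ ¬ G.Adj u v := by
    by_contra hcon
    push_neg at hcon
    apply hnc
    ext u v
    simp only [top_adj]
    exact ⟨fun h => h.ne, fun h => hcon u v h⟩
  have hediam : G.ediam ≠ ⊤ := by
    obtain ⟨⟨u0, v0⟩, hmax⟩ := Finite.exists_max (fun p : V × V => G.edist p.1 p.2)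
    have hlt : G.edist u0 v0 ≠ ⊤ := by
      obtain ⟨pw, hpw⟩ := (hconn.preconnected u0 v0).exists_walk_length_eq_edist
      rw [← hpw]
      exact ENat.coe_ne_top _
    have hle : G.ediam ≤ G.edist u0 v0 := iSup_le fun a => iSup_le fun b => hmax (a, b)
    intro he
    rw [he] at hle
    exact hlt (top_le_iff.mp hle)
  have hD2 : 2 ≤ D := by
    obtain ⟨u, v, huv, hnadj⟩ := hpair
    have h1 : G.dist u v ≠ 0 := fun h => huv (hconn.dist_eq_zero_iff.mp h)
    have h2 : G.dist u v ≠ 1 := fun h => hnadj (dist_eq_one_iff_adj.mp h)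
    have h3 : G.dist u v ≤ D := dist_le_diam hediam
    omega
  -- arithmetic facts
  set A := q * D with hA
  have hA2 : 2 * q ≤ A := by
    rw [hA]
    calc 2 * q = q * 2 := by ring
      _ ≤ q * D := Nat.mul_le_mul_left q hD2
  have hAq0 : q = 0 → A = 0 := by intro h; rw [hA, h]; ring
  have hDQpos : (0 : ℚ) < (D : ℚ) := by exact_mod_cast (by omega : 0 < D)
  have hceil : ⌈(ω : ℚ) / (D : ℚ)⌉₊ = if s = 0 then q else q + 1 := by
    by_cases hs0 : s = 0
    · rw [if_pos hs0]
      have he : (ω : ℚ) / (D : ℚ) = (q : ℚ) := by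
        have hωq : ω = q * D := by rw [hqs, hs0, hA]; omega
        rw [hωq]
        push_cast
        rw [mul_div_assoc, div_self (by exact_mod_cast (by omega : D ≠ 0) : (D:ℚ) ≠ 0), mul_one]
      rw [he, Nat.ceil_natCast]
    · rw [if_neg hs0]
      have hn1 : q * D < ω := by rw [hqs]; omega
      have hn2 : ω ≤ (q + 1) * D := by
        have h9 : (q + 1) * D = A + D := by rw [hA]; ring
        rw [hqs, h9]
        omega
      rw [Nat.ceil_eq_iff (by omega)]
      constructor
      · have h8 : (q + 1 - 1 : ℕ) = q := by omega
        rw [h8, lt_div_iff₀ hDQpos]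
        exact_mod_cast hn1
      · rw [div_le_iff₀ hDQpos]
        push_cast
        exact_mod_cast hn2
  set ρ := q + 1 + (if s ≤ 1 then 0 else 1) with hρ
  have hgoalLHS : 1 + ⌈(ω : ℚ) / (D : ℚ)⌉₊ - (if s = 1 then 1 else 0) = ρ := by
    rw [hceil, hρ]
    split_ifs <;> omega
  have hρω : ρ + 1 ≤ ω := by
    rw [hρ, hqs]
    split_ifs <;> omega
  have hρ2 : 2 ≤ ρ := by
    rw [hρ]
    have h9 : ω = A + s := hqs
    split_ifs <;> omega
  have hpig : D * (ρ - 2) < ω - 1 := by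
    have h9 : ω = A + s := hqs
    by_cases h : s ≤ 1
    · have hρq : ρ = q + 1 := by rw [hρ, if_pos h]
      rcases Nat.eq_zero_or_pos q with hq0 | hq1
      · have : ρ - 2 = 0 := by omega
        rw [this, Nat.mul_zero]
        omega
      · have h1 : ρ - 2 = q - 1 := by omega
        rw [h1]
        have h2 : D * (q - 1) + D = A := by
          have h3 : q - 1 + 1 = q := by omega
          calc D * (q - 1) + D = D * ((q - 1) + 1) := by ring
            _ = D * q := by rw [h3]
            _ = A := by rw [hA]; ring
        set X := D * (q - 1) with hX
        omega
    · have hρq : ρ = q + 2 := by rw [hρ, if_neg h]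
      have h1 : ρ - 2 = q := by omega
      rw [h1]
      have h2 : D * q = A := by rw [hA]; ring
      omega
  -- configuration part
  have hρQ : ρ < Q.card := by rw [hQcard]; omega
  have hclqcfg : ∀ x ∈ Q, ∀ i : Fin ρ, ∃ g : Fin ρ ↪ V, Set.range ⇑g ⊆ ↑Q ∧ g i = x := by
    intro x hx i
    let e0 : Fin ρ ↪ {a // a ∈ Q} :=
      (Fin.castLEEmb (le_of_lt hρQ)).trans Q.equivFin.symm.toEmbedding
    let sw := Equiv.swap (e0 i) (⟨x, hx⟩ : {a // a ∈ Q})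
    let e1 := e0.trans sw.toEmbedding
    refine ⟨e1.trans (Function.Embedding.subtype _), ?_, ?_⟩
    · rintro _ ⟨j, rfl⟩
      exact (e1 j).2
    · show ((sw (e0 i) : {a // a ∈ Q}) : V) = x
      rw [Equiv.swap_apply_left]
  obtain ⟨f₀, hf₀Q, -⟩ := hclqcfg hQne.choose hQne.choose_spec ⟨0, by omega⟩
  have hPf₀ : IsGenPosSet G (Set.range ⇑f₀) := isGenPosSet_of_subset_clique hconn hQclique hf₀Q
  have key : ∀ (v : V) (i : Fin ρ), ∃ g, Reach G (IsGenPosSet G) f₀ g ∧ g i = v := by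
    intro v i
    by_cases hvQ : v ∈ Q
    · obtain ⟨g, hgQ, hgi⟩ := hclqcfg v hvQ i
      exact ⟨g, clique_reach hconn hQclique hρQ f₀ g hf₀Q hgQ, hgi⟩
    · -- v is outside the clique: dive along a geodesic from the nearest clique vertex
      obtain ⟨w, hwQ, hwmin⟩ := Q.exists_min_image (fun u => G.dist u v) hQne
      set k := G.dist w v with hkdef
      have hk1 : 1 ≤ k := by
        have hne : w ≠ v := fun h => hvQ (h ▸ hwQ)
        have h0 : G.dist w v ≠ 0 := fun h => hne (hconn.dist_eq_zero_iff.mp h)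
        omega
      have hkD : k ≤ D := dist_le_diam hediam
      obtain ⟨p, hplen⟩ := (hconn.preconnected w v).exists_walk_length_eq_dist
      have hpk : p.length = k := hplen
      have hfacts := getVert_dist_facts hconn p hplen
      have hwin : ∀ u ∈ Q.erase w, ∀ j ≤ k,
          G.dist (p.getVert j) u = j ∨ G.dist (p.getVert j) u = j + 1 := by
        intro u hu j hj
        obtain ⟨huw, huQ⟩ := Finset.mem_erase.mp hu
        have h1 : G.dist w u = 1 := clique_dist_eq_one hQclique hwQ huQ (Ne.symm huw)
        obtain ⟨h2, h3⟩ := hfacts j (by omega)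
        have h2' : G.dist (p.getVert j) w = j := by
          rw [dist_comm (G := G) (u := p.getVert j) (v := w)]; exact h2
        have hup : G.dist (p.getVert j) u ≤ j + 1 := by
          have htri := hconn.dist_triangle (u := p.getVert j) (v := w) (w := u)
          omega
        have hlow : j ≤ G.dist (p.getVert j) u := by
          have htri := hconn.dist_triangle (u := u) (v := p.getVert j) (w := v)
          have hminu : G.dist w v ≤ G.dist u v := hwmin u huQ
          have hcm : G.dist u (p.getVert j) = G.dist (p.getVert j) u :=
            dist_comm (G := G) (u := u) (v := p.getVert j)
          have hkk : G.dist w v = k := hkdef.symm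
          have hpp : p.length = k := hpk
          omega
        omega
      have hpers : ∀ u ∈ Q.erase w, ∀ j, j + 1 ≤ k → G.dist (p.getVert j) u = j →
          G.dist (p.getVert (j + 1)) u = j + 1 := by
        intro u hu j hj hdrop
        have hadj := p.adj_getVert_succ (i := j) (by omega)
        have h1 : G.dist (p.getVert (j + 1)) (p.getVert j) = 1 :=
          dist_eq_one_iff_adj.mpr hadj.symm
        have htri := hconn.dist_triangle (u := p.getVert (j + 1)) (v := p.getVert j) (w := u)
        have hw2 := hwin u hu (j + 1) (by omega)
        omega
      have hmono : ∀ u ∈ Q.erase w, ∀ j0 j : ℕ, j0 ≤ j → j ≤ k →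
          G.dist (p.getVert j0) u = j0 → G.dist (p.getVert j) u = j := by
        intro u hu j0 j hj0 hjk hd
        induction j, hj0 using Nat.le_induction with
        | base => exact hd
        | succ n hn ih => exact hpers u hu n (by omega) (ih (by omega))
      set Θ : V → ℕ := fun u => sInf {j | j ≤ k ∧ G.dist (p.getVert j) u = j} with hΘdef
      have hΘnot0 : ∀ u ∈ Q.erase w,
          (0 : ℕ) ∉ {j | j ≤ k ∧ G.dist (p.getVert j) u = j} := by
        intro u hu hmem
        obtain ⟨-, hdd⟩ := hmem
        rw [p.getVert_zero] at hdd
        exact (Finset.mem_erase.mp hu).1 ((hconn.dist_eq_zero_iff.mp hdd).symm)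
      have hΘ0 : ∀ u ∈ Q.erase w, Θ u = 0 → ∀ j ≤ k, G.dist (p.getVert j) u = j + 1 := by
        intro u hu h0 j hj
        have hemp : {j | j ≤ k ∧ G.dist (p.getVert j) u = j} = ∅ := by
          rcases Nat.sInf_eq_zero.mp h0 with h | h
          · exact absurd h (hΘnot0 u hu)
          · exact h
        rcases hwin u hu j hj with h | h
        · exact absurd (Set.mem_setOf.mpr ⟨hj, h⟩ : j ∈ {j | j ≤ k ∧ G.dist (p.getVert j) u = j})
            (by rw [hemp]; exact Set.notMem_empty j)
        · exact h
      have hΘpos : ∀ u ∈ Q.erase w, Θ u ≠ 0 →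
          Θ u ∈ {j | j ≤ k ∧ G.dist (p.getVert j) u = j} := by
        intro u hu h0
        apply Nat.sInf_mem
        by_contra hne
        rw [Set.not_nonempty_iff_eq_empty] at hne
        exact h0 (by rw [hΘdef]; simp only [hne, Nat.sInf_empty])
      have hΘval : ∀ u ∈ Q.erase w, ∀ j ≤ k,
          G.dist (p.getVert j) u = (if Θ u ≠ 0 ∧ Θ u ≤ j then j else j + 1) := by
        intro u hu j hj
        by_cases h0 : Θ u ≠ 0 ∧ Θ u ≤ j
        · rw [if_pos h0]
          obtain ⟨hτk, hτd⟩ := hΘpos u hu h0.1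
          exact hmono u hu (Θ u) j h0.2 hj hτd
        · rw [if_neg h0]
          push_neg at h0
          by_cases hz : Θ u = 0
          · exact hΘ0 u hu hz j hj
          · have hlt : j < Θ u := by have := h0 hz; omega
            have hnotmem := Nat.notMem_of_lt_sInf (s := {j | j ≤ k ∧ G.dist (p.getVert j) u = j}) hlt
            rcases hwin u hu j hj with h | h
            · exact absurd ⟨hj, h⟩ hnotmem
            · exact h
      have hΘD : k = D → ∀ u ∈ Q.erase w, Θ u ≠ 0 := by
        intro hkD' u hu h0
        have hval := hΘ0 u hu h0 k le_rfl
        have hDD : G.dist (p.getVert k) u ≤ D := dist_le_diam hediam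
        omega
      have hmaps : ∃ T : Finset ℕ, T.card ≤ D ∧ ∀ u ∈ Q.erase w, Θ u ∈ T := by
        by_cases hkd : k < D
        · refine ⟨Finset.range (k + 1), by rw [Finset.card_range]; omega, fun u hu => ?_⟩
          rw [Finset.mem_range]
          by_cases hz : Θ u = 0
          · omega
          · have := (hΘpos u hu hz).1
            omega
        · have hkD' : k = D := by omega
          refine ⟨Finset.Icc 1 k, by rw [Nat.card_Icc]; omega, fun u hu => ?_⟩
          have hz := hΘD hkD' u hu
          rw [Finset.mem_Icc]
          exact ⟨Nat.one_le_iff_ne_zero.mpr hz, (hΘpos u hu hz).1⟩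
      obtain ⟨T, hTcard, hTmaps⟩ := hmaps
      have hQecard : (Q.erase w).card = ω - 1 := by
        rw [Finset.card_erase_of_mem hwQ, hQcard]
      have hpigeon : ∃ ℓ ∈ T, (ρ - 2) < ((Q.erase w).filter (fun u => Θ u = ℓ)).card := by
        apply Finset.exists_lt_card_fiber_of_mul_lt_card_of_maps_to hTmaps
        calc T.card * (ρ - 2) ≤ D * (ρ - 2) := Nat.mul_le_mul_right _ hTcard
          _ < ω - 1 := hpig
          _ = (Q.erase w).card := hQecard.symm
      obtain ⟨ℓ, hℓT, hfib⟩ := hpigeon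
      obtain ⟨S₀, hS₀sub, hS₀card⟩ := Finset.exists_subset_card_eq
        (s := (Q.erase w).filter (fun u => Θ u = ℓ)) (n := ρ - 1) (by omega)
      have hS₀ : ∀ u ∈ S₀, u ∈ Q.erase w ∧ Θ u = ℓ := by
        intro u hu
        have := Finset.mem_filter.mp (hS₀sub hu)
        exact ⟨this.1, this.2⟩
      have hwS₀ : w ∉ S₀ := fun h => (Finset.mem_erase.mp (hS₀ w h).1).1 rfl
      set T1 := insert w S₀ with hT1
      have hT1card : T1.card = ρ := by
        rw [hT1, Finset.card_insert_of_notMem hwS₀, hS₀card]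
        omega
      have hT1Q : (↑T1 : Set V) ⊆ ↑Q := by
        intro x hx
        rcases Finset.mem_insert.mp (Finset.mem_coe.mp hx) with rfl | h
        · exact hwQ
        · exact Finset.mem_coe.mpr (Finset.mem_erase.mp (hS₀ x h).1).2
      have hef : ∃ f' : Fin ρ ↪ V, Set.range ⇑f' = ↑T1 ∧ f' i = w := by
        have e0 : Fin ρ ≃ {a // a ∈ T1} := (finCongr hT1card.symm).trans T1.equivFin.symm
        let sw := Equiv.swap (e0 i) (⟨w, Finset.mem_insert_self w S₀⟩ : {a // a ∈ T1})
        let e1 := e0.trans sw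
        refine ⟨e1.toEmbedding.trans (Function.Embedding.subtype _), ?_, ?_⟩
        · ext x
          constructor
          · rintro ⟨j, rfl⟩
            exact (e1 j).2
          · intro hx
            exact ⟨e1.symm ⟨x, Finset.mem_coe.mp hx⟩, by simp⟩
        · show ((sw (e0 i) : {a // a ∈ T1}) : V) = w
          rw [Equiv.swap_apply_left]
      obtain ⟨f', hf'range, hf'i⟩ := hef
      set vj : ℕ → ℕ := fun j => if ℓ ≠ 0 ∧ ℓ ≤ j then j else j + 1 with hvjdef
      have hS₀dist : ∀ u ∈ S₀, ∀ j ≤ k, G.dist (p.getVert j) u = vj j := by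
        intro u hu j hj
        have h9 := hΘval u (hS₀ u hu).1 j hj
        rw [(hS₀ u hu).2] at h9
        exact h9
      have hvj_eq : ∀ j, vj j = if ℓ ≠ 0 ∧ ℓ ≤ j then j else j + 1 := fun j => rfl
      have hvjge : ∀ j, j ≤ vj j := by
        intro j
        rw [hvj_eq]
        split_ifs <;> omega
      have hxx : ∀ j, 1 ≤ j → j ≤ p.length → p.getVert j ∉ Set.range ⇑f' := by
        intro j h1 h2 hmem
        rw [hf'range] at hmem
        rcases Finset.mem_insert.mp (Finset.mem_coe.mp hmem) with heq | hS
        · have h3 := (hfacts j h2).1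
          rw [heq] at h3
          rw [SimpleGraph.dist_self] at h3
          omega
        · have hd := hS₀dist _ hS j (by omega)
          have h4 := hvjge j
          rw [SimpleGraph.dist_self] at hd
          omega
      have hS₀Q : (↑S₀ : Set V) ⊆ ↑Q := by
        intro x hx
        exact Finset.mem_coe.mpr (Finset.mem_erase.mp (hS₀ x (Finset.mem_coe.mp hx)).1).2
      have hgp : ∀ j ≤ p.length, IsGenPosSet G ((Set.range ⇑f' \ {w}) ∪ {p.getVert j}) := by
        intro j hj
        have hset : (Set.range ⇑f' \ {w}) = ↑S₀ := by
          rw [hf'range, hT1]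
          ext x
          simp only [Finset.coe_insert, Set.mem_diff, Set.mem_insert_iff, Set.mem_singleton_iff,
            Finset.mem_coe]
          constructor
          · rintro ⟨rfl | hx, hne⟩
            · exact absurd rfl hne
            · exact hx
          · intro hx
            exact ⟨Or.inr hx, fun he => hwS₀ (he ▸ hx)⟩
        rw [hset]
        by_cases hj0 : j = 0
        · subst hj0
          rw [p.getVert_zero]
          apply isGenPosSet_of_subset_clique hconn hQclique
          intro x hx
          rcases hx with hx | hx
          · exact hS₀Q hx
          · rw [Set.mem_singleton_iff.mp hx]
            exact Finset.mem_coe.mpr hwQ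
        · apply isGenPosSet_of_noCollinear hconn
          have hdS : ∀ x ∈ (↑S₀ : Set V), ∀ y ∈ (↑S₀ : Set V), x ≠ y → G.dist x y = 1 := by
            intro x hx y hy hxy
            exact clique_dist_eq_one hQclique (Finset.mem_coe.mp (hS₀Q hx))
              (Finset.mem_coe.mp (hS₀Q hy)) hxy
          have hdX : ∀ x ∈ (↑S₀ : Set V), G.dist (p.getVert j) x = vj j := by
            intro x hx
            exact hS₀dist x (Finset.mem_coe.mp hx) j (by omega)
          have hdX' : ∀ x ∈ (↑S₀ : Set V), G.dist x (p.getVert j) = vj j := by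
            intro x hx
            rw [dist_comm (G := G) (u := x) (v := p.getVert j)]
            exact hdX x hx
          have hvj1 : 1 ≤ vj j := by
            have := hvjge j
            omega
          intro a ha b hb c hc hab hac hbc
          rcases ha with haS | haX
          · rcases hb with hbS | hbX
            · rcases hc with hcS | hcX
              · rw [hdS a haS b hbS hab, hdS b hbS c hcS hbc, hdS a haS c hcS hac]
                omega
              · rw [Set.mem_singleton_iff] at hcX
                have e1 : G.dist a b = 1 := hdS a haS b hbS hab
                have e2 : G.dist b c = vj j := by rw [hcX]; exact hdX' b hbS
                have e3 : G.dist a c = vj j := by rw [hcX]; exact hdX' a haS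
                rw [e1, e2, e3]
                omega
            · rw [Set.mem_singleton_iff] at hbX
              rcases hc with hcS | hcX
              · have e1 : G.dist a b = vj j := by rw [hbX]; exact hdX' a haS
                have e2 : G.dist b c = vj j := by rw [hbX]; exact hdX c hcS
                have e3 : G.dist a c = 1 := hdS a haS c hcS hac
                rw [e1, e2, e3]
                omega
              · rw [Set.mem_singleton_iff] at hcX
                exact absurd (hbX.trans hcX.symm) hbc
          · rw [Set.mem_singleton_iff] at haX
            rcases hb with hbS | hbX
            · rcases hc with hcS | hcX
              · have e1 : G.dist a b = vj j := by rw [haX]; exact hdX b hbS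
                have e2 : G.dist b c = 1 := hdS b hbS c hcS hbc
                have e3 : G.dist a c = vj j := by rw [haX]; exact hdX c hcS
                rw [e1, e2, e3]
                omega
              · rw [Set.mem_singleton_iff] at hcX
                exact absurd (haX.trans hcX.symm) hac
            · rw [Set.mem_singleton_iff] at hbX
              exact absurd (haX.trans hbX.symm) hab
      obtain ⟨g, hreachdive, hgi, -⟩ := dive f' i p hf'i hxx hgp
      have hreach0 : Reach G (IsGenPosSet G) f₀ f' :=
        clique_reach hconn hQclique hρQ f₀ f' hf₀Q (by rw [hf'range]; exact hT1Q)
      exact ⟨g, hreach0.trans hreachdive, hgi⟩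
  have hcm : IsCompletelyMobileConfig G (IsGenPosSet G) f₀ :=
    completely_mobile_of_reaches f₀ (by omega) hPf₀ key
  have hbddc : BddAbove {t : ℕ | ∃ f : Fin t ↪ V, IsCompletelyMobileConfig G (IsGenPosSet G) f} := by
    refine ⟨Fintype.card V, ?_⟩
    rintro t ⟨f, -⟩
    simpa using Fintype.card_le_of_embedding f
  have hbddm : BddAbove {t : ℕ | ∃ f : Fin t ↪ V, IsMobileConfig G (IsGenPosSet G) f} := by
    refine ⟨Fintype.card V, ?_⟩
    rintro t ⟨f, -⟩
    simpa using Fintype.card_le_of_embedding f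
  have hmemc : ρ ∈ {t : ℕ | ∃ f : Fin t ↪ V, IsCompletelyMobileConfig G (IsGenPosSet G) f} :=
    ⟨f₀, hcm⟩
  constructor
  · rw [hgoalLHS]
    exact le_csSup hbddc hmemc
  · apply csSup_le_csSup hbddm ⟨ρ, hmemc⟩
    rintro t ⟨f, hf⟩
    exact ⟨f, hf.1⟩
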